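/- Let K be a field and let v : K(x,y) → (ℤ⊕ℤ, lex) ∪ {∞} be the K-valuation associated to (m,n,w,α,β) = (2, 3, y²+x³, (-1,-1), (0,-1)) with ℤ⊕ℤ ordered lexicographically. Then v(K[x,y]*) ⊆ ℤ_{≥0}·(-1,-1) + ℤ_{≥0}·(0,-1), so v(K[x,y]*) is reversely well-ordered, and v does not come from a monomial order in suitable variables since v(K[x,y]*) ≠ ℤ_{≤0} ⊕ ℤ_{≤0}. -/

import Mathlib

open Polynomial

/-- The value of the term `a·y^j·w^i` (with `p = (i,j)`) under the map associated to
`(m, n, w, α, β)`: `-v_∞(a)·mα + jnα + iβ`, where `-v_∞(a) = intDegree a`. -/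
noncomputable def termWeight (K : Type*) [Field K] (m n : ℕ) (α β : ℤ ×ₗ ℤ)
    (p : ℕ × ℕ) (a : RatFunc K) : ℤ ×ₗ ℤ :=
  (a.intDegree * (m : ℤ)) • α + ((p.2 : ℤ) * (n : ℤ)) • α + (p.1 : ℤ) • β

/-- An element of `K(x)[y]` lies in `K[x,y]` iff all its coefficients are polynomials. -/
def polyCoeffs (K : Type*) [Field K] (f : Polynomial (RatFunc K)) : Prop :=
  ∀ i : ℕ, ∃ p : Polynomial K, f.coeff i = algebraMap (Polynomial K) (RatFunc K) p

lemma exists_expansion {R : Type*} [CommRing R] [Nontrivial R] (t : R) :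
    ∀ (F : Polynomial R),
    ∃ c : (ℕ × ℕ) →₀ R, (∀ p ∈ c.support, p.2 < 2) ∧
      F = c.sum (fun p a => C a * X ^ p.2 * (X ^ 2 + C t) ^ p.1) := by
  have hmonic : (X ^ 2 + C t : Polynomial R).Monic := monic_X_pow_add_C t two_ne_zero
  set W : Polynomial R := X ^ 2 + C t with hW
  have hg0 : ∀ p : ℕ × ℕ, (C (0 : R)) * X ^ p.2 * W ^ p.1 = 0 := by
    intro p; simp
  have hgadd : ∀ (p : ℕ × ℕ) (a b : R),
      C (a + b) * X ^ p.2 * W ^ p.1 = C a * X ^ p.2 * W ^ p.1 + C b * X ^ p.2 * W ^ p.1 := by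
    intro p a b; simp [map_add]; ring
  suffices H : ∀ (N : ℕ) (F : Polynomial R), F.natDegree < N →
      ∃ c : (ℕ × ℕ) →₀ R, (∀ p ∈ c.support, p.2 < 2) ∧
      F = c.sum (fun p a => C a * X ^ p.2 * W ^ p.1) by
    intro F; exact H (F.natDegree + 1) F (Nat.lt_succ_self _)
  intro N
  induction N with
  | zero => intro F h; omega
  | succ N ih =>
    intro F hdeg
    by_cases hF : F = 0
    · exact ⟨0, by simp, by simp [hF]⟩
    set q := F /ₘ W with hq
    set r := F %ₘ W with hr
    have hFeq : F = W * q + r := by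
      have h := Polynomial.modByMonic_add_div F W
      exact h.symm.trans (add_comm r (W * q))
    have hrdeg : r.degree < 2 := by
      have := Polynomial.degree_modByMonic_lt F hmonic
      rwa [show W.degree = 2 by
        rw [hW]; compute_degree!] at this
    have hrnd : r.natDegree ≤ 1 := by
      by_cases h0 : r = 0
      · simp [h0]
      · have := (Polynomial.natDegree_lt_iff_degree_lt h0 (n := 2)).mpr (by exact_mod_cast hrdeg)
        omega
    obtain ⟨r1, r0, hrexp⟩ := Polynomial.exists_eq_X_add_C_of_natDegree_le_one hrnd
    by_cases hq0 : q = 0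
    · -- F = r
      refine ⟨Finsupp.single (0,1) r1 + Finsupp.single (0,0) r0, ?_, ?_⟩
      · intro p hp
        have := Finsupp.support_add hp
        simp only [Finset.mem_union] at this
        rcases this with h | h <;>
          · have := Finsupp.support_single_subset h
            simp at this; subst this; norm_num
      · rw [Finsupp.sum_add_index' hg0 hgadd, Finsupp.sum_single_index (hg0 _),
          Finsupp.sum_single_index (hg0 _)]
        simp only [pow_zero, pow_one, mul_one]
        rw [hFeq, hq0, mul_zero, zero_add, hrexp]
    · have hqdeg : q.natDegree < N := by
        have h2 : F.degree ≥ 2 := by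
          by_contra h
          exact hq0 ((Polynomial.divByMonic_eq_zero_iff hmonic).mpr
            (by rw [show W.degree = 2 by rw [hW]; compute_degree!]; exact lt_of_not_ge h))
        have hFnd : 2 ≤ F.natDegree := by
          have := Polynomial.natDegree_le_iff_degree_le (n := 1) (p := F)
          by_contra h
          exact absurd (this.mp (by omega)) (by
            intro hle
            exact absurd (lt_of_le_of_lt hle (by norm_num)) (not_lt.mpr h2))
        have : q.natDegree = F.natDegree - 2 := by
          rw [hq, Polynomial.natDegree_divByMonic F hmonic,
            show W.natDegree = 2 by rw [hW]; compute_degree!]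
        omega
      obtain ⟨c', hc'supp, hc'sum⟩ := ih q hqdeg
      refine ⟨Finsupp.mapDomain (fun p => (p.1 + 1, p.2)) c'
        + Finsupp.single (0,1) r1 + Finsupp.single (0,0) r0, ?_, ?_⟩
      · intro p hp
        have h1 := Finsupp.support_add hp
        simp only [Finset.mem_union] at h1
        rcases h1 with h1 | h1
        · have h2 := Finsupp.support_add h1
          simp only [Finset.mem_union] at h2
          rcases h2 with h2 | h2
          · have := Finsupp.mapDomain_support h2
            simp only [Finset.mem_image] at this
            obtain ⟨p', hp', hpe⟩ := this
            have := hc'supp p' hp'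
            rw [← hpe]; exact this
          · have := Finsupp.support_single_subset h2
            simp at this; subst this; norm_num
        · have := Finsupp.support_single_subset h1
          simp at this; subst this; norm_num
      · rw [Finsupp.sum_add_index' hg0 hgadd, Finsupp.sum_add_index' hg0 hgadd,
          Finsupp.sum_single_index (hg0 _), Finsupp.sum_single_index (hg0 _),
          Finsupp.sum_mapDomain_index (fun p => hg0 _) (fun p a b => hgadd _ a b)]
        have : (c'.sum fun p a => C a * X ^ (p.1 + 1, p.2).2 * W ^ (p.1 + 1, p.2).1)
            = W * (c'.sum fun p a => C a * X ^ p.2 * W ^ p.1) := by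
          rw [Finsupp.mul_sum]
          apply Finsupp.sum_congr
          intro p hp
          simp only [pow_succ]
          ring
        rw [this, ← hc'sum]
        simp only [pow_zero, pow_one, mul_one]
        rw [hFeq, hrexp]; ring

theorem part1 (K : Type*) [Field K] (m n : ℕ) (hm : m = 2) (hn : n = 3)
    (w : Polynomial (RatFunc K)) (hwdef : w = X ^ 2 + Polynomial.C (RatFunc.X ^ 3))
    (α β : ℤ ×ₗ ℤ) (hα : α = toLex (-1, -1)) (hβ : β = toLex (0, -1))
    (v : Polynomial (RatFunc K) → WithTop (ℤ ×ₗ ℤ))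
    (hv : ∀ (f : Polynomial (RatFunc K)) (c : (ℕ × ℕ) →₀ RatFunc K),
      (∀ p ∈ c.support, p.2 < m) →
      f = c.sum (fun p a => Polynomial.C a * X ^ p.2 * w ^ p.1) →
      v f = c.support.inf (fun p => ((termWeight K m n α β p (c p) : WithTop (ℤ ×ₗ ℤ))))) :
    ∀ f : Polynomial (RatFunc K), polyCoeffs K f → f ≠ 0 →
      ∃ a b : ℕ, v f = ((a : ℤ) • α + (b : ℤ) • β : ℤ ×ₗ ℤ) := by
  intro f hpoly hf0
  -- lift f to K[x][y]
  obtain ⟨F, hF⟩ : ∃ F : Polynomial (Polynomial K),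
      F.map (algebraMap (Polynomial K) (RatFunc K)) = f := by
    choose p hp using hpoly
    refine ⟨∑ i ∈ f.support, C (p i) * X ^ i, ?_⟩
    rw [Polynomial.map_sum]
    conv_rhs => rw [f.as_sum_support]
    refine Finset.sum_congr rfl fun i _ => ?_
    rw [Polynomial.map_mul, Polynomial.map_pow, Polynomial.map_C, Polynomial.map_X, ← hp,
      Polynomial.C_mul_X_pow_eq_monomial]
  obtain ⟨c', hc'supp, hc'sum⟩ := exists_expansion (Polynomial.X ^ 3 : Polynomial K) F
  set A := algebraMap (Polynomial K) (RatFunc K) with hA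
  set cc : (ℕ × ℕ) →₀ RatFunc K := c'.mapRange A (map_zero A) with hcc
  have hccapp : ∀ p, cc p = A (c' p) := fun p => rfl
  have hsupp : ∀ p ∈ cc.support, p.2 < m := by
    intro p hp
    rw [hm]
    exact hc'supp p (Finsupp.support_mapRange hp)
  have hwmap : (X ^ 2 + C (Polynomial.X ^ 3) : Polynomial (Polynomial K)).map A = w := by
    rw [Polynomial.map_add, Polynomial.map_pow, Polynomial.map_X, Polynomial.map_C, hwdef,
      map_pow, hA, RatFunc.algebraMap_X]
  have hsum : f = cc.sum (fun p a => Polynomial.C a * X ^ p.2 * w ^ p.1) := by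
    rw [Finsupp.sum_mapRange_index (by intro p; simp)]
    rw [← hF, hc'sum, Finsupp.sum, Finsupp.sum, Polynomial.map_sum]
    refine Finset.sum_congr rfl fun p _ => ?_
    rw [Polynomial.map_mul, Polynomial.map_mul, Polynomial.map_pow, Polynomial.map_pow,
      Polynomial.map_C, Polynomial.map_X, hwmap]
  have hvf := hv f cc hsupp hsum
  have hne : cc.support.Nonempty := by
    rw [Finsupp.support_nonempty_iff]
    intro h
    exact hf0 (by rw [hsum, h, Finsupp.sum_zero_index])
  obtain ⟨p₀, hp₀, hinf⟩ := Finset.exists_mem_eq_inf cc.support hne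
    (fun p => ((termWeight K m n α β p (cc p) : WithTop (ℤ ×ₗ ℤ))))
  refine ⟨2 * (c' p₀).natDegree + 3 * p₀.2, p₀.1, ?_⟩
  rw [hvf, hinf]
  congr 1
  rw [termWeight, hccapp, hA, RatFunc.intDegree_polynomial, hm, hn]
  push_cast
  module

/-- Example 5.2: for the `K`-valuation `v` associated to
`(m,n,w,α,β) = (2, 3, y²+x³, (-1,-1), (0,-1))` (lexicographic order on `ℤ⊕ℤ`),
the image `v(K[x,y]*)` is contained in `ℤ_{≥0}·α + ℤ_{≥0}·β`, hence is reversely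
well-ordered; and `v(K[x,y]*) ≠ ℤ_{≤0} ⊕ ℤ_{≤0}`, so `v` does not come from a
monomial order in suitable variables. -/
theorem stmt14 (K : Type*) [Field K] (m n : ℕ) (hm : m = 2) (hn : n = 3)
    (w : Polynomial (RatFunc K)) (hwdef : w = X ^ 2 + Polynomial.C (RatFunc.X ^ 3))
    (α β : ℤ ×ₗ ℤ) (hα : α = toLex (-1, -1)) (hβ : β = toLex (0, -1))
    (v : Polynomial (RatFunc K) → WithTop (ℤ ×ₗ ℤ))
    (hexp : ∀ f : Polynomial (RatFunc K), ∃ c : (ℕ × ℕ) →₀ RatFunc K,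
      (∀ p ∈ c.support, p.2 < m) ∧
      f = c.sum (fun p a => Polynomial.C a * X ^ p.2 * w ^ p.1))
    (hv : ∀ (f : Polynomial (RatFunc K)) (c : (ℕ × ℕ) →₀ RatFunc K),
      (∀ p ∈ c.support, p.2 < m) →
      f = c.sum (fun p a => Polynomial.C a * X ^ p.2 * w ^ p.1) →
      v f = c.support.inf (fun p => ((termWeight K m n α β p (c p) : WithTop (ℤ ×ₗ ℤ))))) :
    -- `v(K[x,y]*) ⊆ ℤ_{≥0}·α + ℤ_{≥0}·β`
    (∀ f : Polynomial (RatFunc K), polyCoeffs K f → f ≠ 0 →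
      ∃ a b : ℕ, v f = ((a : ℤ) • α + (b : ℤ) • β : ℤ ×ₗ ℤ)) ∧
    -- `v(K[x,y]*)` is reversely well-ordered
    (∀ S : Set (ℤ ×ₗ ℤ),
      S ⊆ {γ : ℤ ×ₗ ℤ | ∃ f : Polynomial (RatFunc K),
        polyCoeffs K f ∧ f ≠ 0 ∧ v f = (γ : WithTop (ℤ ×ₗ ℤ))} →
      S.Nonempty → ∃ mx ∈ S, ∀ s ∈ S, s ≤ mx) ∧
    -- `v(K[x,y]*) ≠ ℤ_{≤0} ⊕ ℤ_{≤0}` (so `v` does not come from a monomial order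
    -- in suitable variables)
    {γ : ℤ ×ₗ ℤ | ∃ f : Polynomial (RatFunc K),
        polyCoeffs K f ∧ f ≠ 0 ∧ v f = (γ : WithTop (ℤ ×ₗ ℤ))} ≠
      {γ : ℤ ×ₗ ℤ | (ofLex γ).1 ≤ 0 ∧ (ofLex γ).2 ≤ 0} := by
  have h1 := part1 K m n hm hn w hwdef α β hα hβ v hv
  have hval : ∀ a b : ℕ, ((a:ℤ) • α + (b:ℤ) • β) = toLex (-(a:ℤ), -(a:ℤ)-(b:ℤ)) := by
    intro a b
    rw [hα, hβ]
    change ((a:ℤ) • ((-1:ℤ),(-1:ℤ)) + (b:ℤ) • ((0:ℤ),(-1:ℤ)) : ℤ × ℤ) = (-(a:ℤ), -(a:ℤ)-(b:ℤ))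
    simp [Prod.ext_iff]; ring
  have key : ∀ γ : ℤ ×ₗ ℤ, (∃ f : Polynomial (RatFunc K),
      polyCoeffs K f ∧ f ≠ 0 ∧ v f = (γ : WithTop (ℤ ×ₗ ℤ))) →
      (ofLex γ).2 ≤ (ofLex γ).1 ∧ (ofLex γ).1 ≤ 0 := by
    rintro γ ⟨f, hfp, hf0, hvf⟩
    obtain ⟨a, b, hab⟩ := h1 f hfp hf0
    have hγ : γ = ((a:ℤ) • α + (b:ℤ) • β) := by
      have := hvf.symm.trans hab
      exact_mod_cast this
    rw [hγ, hval]
    constructor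
    · show -(a:ℤ) - b ≤ -(a:ℤ); omega
    · show -(a:ℤ) ≤ 0; omega
  refine ⟨h1, ?_, ?_⟩
  · rintro S hS ⟨γ₀, hγ₀⟩
    have hkey : ∀ γ ∈ S, (ofLex γ).2 ≤ (ofLex γ).1 ∧ (ofLex γ).1 ≤ 0 :=
      fun γ h => key γ (hS h)
    obtain ⟨a₀, ⟨γ₁, hγ₁S, hγ₁⟩, ha₀max⟩ := Int.exists_greatest_of_bdd
      (P := fun z => ∃ γ ∈ S, (ofLex γ).1 = z)
      ⟨0, fun z ⟨γ, hγ, he⟩ => he ▸ (hkey γ hγ).2⟩ ⟨(ofLex γ₀).1, γ₀, hγ₀, rfl⟩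
    obtain ⟨b₀, ⟨γ₂, hγ₂S, hγ₂1, hγ₂2⟩, hb₀max⟩ := Int.exists_greatest_of_bdd
      (P := fun z => ∃ γ ∈ S, (ofLex γ).1 = a₀ ∧ (ofLex γ).2 = z)
      ⟨a₀, fun z ⟨γ, hγ, h1', h2'⟩ => by
        rw [← h2', ← h1']; exact (hkey γ hγ).1⟩
      ⟨(ofLex γ₁).2, γ₁, hγ₁S, hγ₁, rfl⟩
    refine ⟨γ₂, hγ₂S, fun s hs => ?_⟩
    have hs1 : (ofLex s).1 ≤ a₀ := ha₀max _ ⟨s, hs, rfl⟩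
    rw [show s = toLex (ofLex s) from rfl, show γ₂ = toLex (ofLex γ₂) from rfl,
      Prod.Lex.le_iff, ofLex_toLex, ofLex_toLex]
    rcases lt_or_eq_of_le hs1 with h | h
    · left; rw [hγ₂1]; exact h
    · right
      exact ⟨by rw [hγ₂1, h], by rw [hγ₂2]; exact hb₀max _ ⟨s, hs, h, rfl⟩⟩
  · intro heq
    have hmem : toLex ((-1 : ℤ), (0 : ℤ)) ∈
        {γ : ℤ ×ₗ ℤ | (ofLex γ).1 ≤ 0 ∧ (ofLex γ).2 ≤ 0} := by
      constructor <;> norm_num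
    rw [← heq] at hmem
    have := (key _ hmem).1
    norm_num at this
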